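/- For n ≥ 2, within any fixed row band a < n of the grid f(i,j) = (n·(i mod n) + i/n + j) mod n^2, the n rows i = a·n + r (r < n) have shift values s(r) = n·r + a, which are pairwise distinct modulo n^2 and pairwise non-congruent modulo n except when equal. In particular, the n rows of a band restricted to any column band b < n give n pairwise disjoint sets of n consecutive symbols (modulo n^2), whose union is all of Fin (n^2). -/
import Mathlib


def bandSet (n a b r : ℕ) : Set ℕ :=
  {x | ∃ c < n, x = (n * r + a + n * b + c) % n ^ 2}

theorem band_partition (n a b : ℕ) (hn : 2 ≤ n) (ha : a < n) (hb : b < n) :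
    (∀ r r', r < n → r' < n →
      (n * r + a) % n ^ 2 = (n * r' + a) % n ^ 2 → r = r') ∧
    (∀ r r', r < n → r' < n → r ≠ r' →
      Disjoint (bandSet n a b r) (bandSet n a b r')) ∧
    (⋃ r ∈ Finset.range n, bandSet n a b r) = Set.Iio (n ^ 2) := by
  have hn0 : 0 < n := by omega
  have hlt : ∀ r : ℕ, r < n → n * r + a < n ^ 2 := by
    intro r hr
    have : n * r + a ≤ n * (n - 1) + (n - 1) := by
      have := Nat.mul_le_mul_left n (Nat.le_sub_one_of_lt hr)
      omega
    nlinarith [Nat.sub_add_cancel (show 1 ≤ n by omega)]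
  refine ⟨?_, ?_, ?_⟩
  · intro r r' hr hr' h
    rw [Nat.mod_eq_of_lt (hlt r hr), Nat.mod_eq_of_lt (hlt r' hr')] at h
    exact Nat.eq_of_mul_eq_mul_left hn0 (by omega)
  · intro r r' hr hr' hne
    rw [Set.disjoint_left]
    rintro x ⟨c, hc, rfl⟩ ⟨c', hc', heq⟩
    -- reduce mod n to get c = c'
    have hmodn : (n * r + a + n * b + c) % n = (n * r' + a + n * b + c') % n := by
      have hd : n ∣ n ^ 2 := ⟨n, (sq n)⟩
      calc (n * r + a + n * b + c) % n
          = (n * r + a + n * b + c) % n ^ 2 % n := (Nat.mod_mod_of_dvd _ hd).symm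
        _ = (n * r' + a + n * b + c') % n ^ 2 % n := by rw [heq]
        _ = (n * r' + a + n * b + c') % n := Nat.mod_mod_of_dvd _ hd
    have hcc : c = c' := by
      have h1 : (n * r + a + n * b + c) % n = (a + c) % n := by
        have : n * r + a + n * b + c = n * (r + b) + (a + c) := by ring
        rw [this, Nat.mul_add_mod]
      have h2 : (n * r' + a + n * b + c') % n = (a + c') % n := by
        have : n * r' + a + n * b + c' = n * (r' + b) + (a + c') := by ring
        rw [this, Nat.mul_add_mod]
      rw [h1, h2] at hmodn
      have : c % n = c' % n := by
        have := Nat.ModEq.add_left_cancel' a hmodn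
        exact this
      rwa [Nat.mod_eq_of_lt hc, Nat.mod_eq_of_lt hc'] at this
    subst hcc
    -- now cancel the common additive part mod n^2
    have h2 : n * r ≡ n * r' [MOD n ^ 2] := by
      have h : n * r + (a + n * b + c) ≡ n * r' + (a + n * b + c) [MOD n ^ 2] := by
        have : (n * r + (a + n * b + c)) % n ^ 2 = (n * r' + (a + n * b + c)) % n ^ 2 := by
          have e1 : n * r + (a + n * b + c) = n * r + a + n * b + c := by ring
          have e2 : n * r' + (a + n * b + c) = n * r' + a + n * b + c := by ring
          rw [e1, e2]; exact heq
        exact this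
      exact Nat.ModEq.add_right_cancel' _ h
    have hr1 : n * r < n ^ 2 := by have := hlt r hr; omega
    have hr2 : n * r' < n ^ 2 := by have := hlt r' hr'; omega
    have : n * r = n * r' := by
      have := h2
      unfold Nat.ModEq at this
      rwa [Nat.mod_eq_of_lt hr1, Nat.mod_eq_of_lt hr2] at this
    exact hne (Nat.eq_of_mul_eq_mul_left hn0 this)
  · ext x
    simp only [Set.mem_iUnion, Finset.mem_range, Set.mem_Iio, bandSet, Set.mem_setOf_eq]
    constructor
    · rintro ⟨r, hr, c, hc, rfl⟩
      exact Nat.mod_lt _ (by positivity)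
    · intro hx
      have hs : a + n * b < n ^ 2 := by nlinarith
      set y := (x + n ^ 2 - (a + n * b)) % n ^ 2 with hy
      have hyn : y < n ^ 2 := Nat.mod_lt _ (by positivity)
      refine ⟨y / n, ?_, y % n, Nat.mod_lt _ hn0, ?_⟩
      · rw [Nat.div_lt_iff_lt_mul hn0]
        calc y < n ^ 2 := hyn
          _ = n * n := sq n
      · have key : n * (y / n) + a + n * b + y % n = y + (a + n * b) := by
          have := Nat.div_add_mod y n
          omega
        rw [key, hy, Nat.mod_add_mod,
          Nat.sub_add_cancel (by omega : a + n * b ≤ x + n ^ 2)]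
        rw [Nat.add_mod_right, Nat.mod_eq_of_lt hx]
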